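/- Fix integers n ≥ 1 and k ≥ 2. Define Ξ_n^k : [0,1]^{n×n} → ℝ by Ξ_n^k(A) = Σ_{i,j=1}^n |R_i(A) - C_j(A)|^k, where R_i(A) = Σ_{j=1}^n a_{ij} and C_j(A) = Σ_{i=1}^n a_{ij}. Then the supremum of Ξ_n^k over all matrices A ∈ [0,1]^{n×n} equals its supremum over the 0-1 matrices A ∈ {0,1}^{n×n} (the maximum is attained at a 0-1 matrix). -/

import Mathlib

private lemma abs_affine_pow_combo (k : ℕ) (c d a : ℝ) (ha0 : 0 ≤ a) (ha1 : a ≤ 1) :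
    |c + d * a| ^ k ≤ (1 - a) * |c + d * 0| ^ k + a * |c + d * 1| ^ k := by
  have h1 : |c + d * a| ≤ (1 - a) * |c + d * 0| + a * |c + d * 1| := by
    have : c + d * a = (1 - a) * (c + d * 0) + a * (c + d * 1) := by ring
    rw [this]
    calc |(1 - a) * (c + d * 0) + a * (c + d * 1)|
        ≤ |(1 - a) * (c + d * 0)| + |a * (c + d * 1)| := abs_add_le _ _
      _ = (1 - a) * |c + d * 0| + a * |c + d * 1| := by
          rw [abs_mul, abs_mul, abs_of_nonneg (by linarith), abs_of_nonneg ha0]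
  calc |c + d * a| ^ k ≤ ((1 - a) * |c + d * 0| + a * |c + d * 1|) ^ k :=
        pow_le_pow_left₀ (abs_nonneg _) h1 k
    _ ≤ (1 - a) * |c + d * 0| ^ k + a * |c + d * 1| ^ k := by
        have := (convexOn_pow (𝕜 := ℝ) k).2 (Set.mem_Ici.2 (abs_nonneg (c + d * 0)))
          (Set.mem_Ici.2 (abs_nonneg (c + d * 1))) (by linarith : (0:ℝ) ≤ 1 - a) ha0
          (by ring)
        simpa using this

theorem sup_Xi_unitInterval_eq_sup_zeroOne (n k : ℕ) (hn : 1 ≤ n) (hk : 2 ≤ k) :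
    sSup { r : ℝ | ∃ A : Fin n → Fin n → ℝ, (∀ i j, A i j ∈ Set.Icc (0 : ℝ) 1) ∧
        r = ∑ i : Fin n, ∑ j : Fin n, |(∑ l : Fin n, A i l) - (∑ l : Fin n, A l j)| ^ k } =
    sSup { r : ℝ | ∃ A : Fin n → Fin n → ℝ, (∀ i j, A i j = 0 ∨ A i j = 1) ∧
        r = ∑ i : Fin n, ∑ j : Fin n, |(∑ l : Fin n, A i l) - (∑ l : Fin n, A l j)| ^ k } := by
  classical
  set f : (Fin n → Fin n → ℝ) → ℝ :=
    fun A => ∑ i : Fin n, ∑ j : Fin n, |(∑ l : Fin n, A i l) - (∑ l : Fin n, A l j)| ^ k with hf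
  -- single entry rounding
  have step : ∀ (A : Fin n → Fin n → ℝ), (∀ i j, A i j ∈ Set.Icc (0:ℝ) 1) →
      ∀ i0 j0 : Fin n, ∃ t : ℝ, (t = 0 ∨ t = 1) ∧
        f A ≤ f (fun i j => if i = i0 ∧ j = j0 then t else A i j) := by
    intro A hA i0 j0
    set B : ℝ → Fin n → Fin n → ℝ :=
      fun t i j => if i = i0 ∧ j = j0 then t else A i j with hB
    have hrow : ∀ t i, (∑ l, B t i l) =
        (∑ l, A i l) + (if i = i0 then 1 else 0) * t + (if i = i0 then -A i0 j0 else 0) := by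
      intro t i
      by_cases hi : i = i0
      · subst hi
        simp only [hB, if_pos rfl, true_and]
        have : ∀ l, (if l = j0 then t else A i l) = A i l + (if l = j0 then t - A i l else 0) := by
          intro l; by_cases h : l = j0 <;> simp [h]
        rw [Finset.sum_congr rfl (fun l _ => this l), Finset.sum_add_distrib,
          Finset.sum_ite_eq' Finset.univ j0 (fun l => t - A i l)]
        simp; ring
      · simp only [hB, hi, false_and, if_false, if_neg hi]
        ring
    have hcol : ∀ t j, (∑ l, B t l j) =
        (∑ l, A l j) + (if j = j0 then 1 else 0) * t + (if j = j0 then -A i0 j0 else 0) := by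
      intro t j
      by_cases hj : j = j0
      · subst hj
        simp only [hB, if_pos rfl, and_true]
        have : ∀ l, (if l = i0 then t else A l j) = A l j + (if l = i0 then t - A l j else 0) := by
          intro l; by_cases h : l = i0 <;> simp [h]
        rw [Finset.sum_congr rfl (fun l _ => this l), Finset.sum_add_distrib,
          Finset.sum_ite_eq' Finset.univ i0 (fun l => t - A l j)]
        simp; ring
      · simp only [hB, hj, and_false, if_false, if_neg hj]
        ring
    set c : Fin n → Fin n → ℝ := fun i j =>
      ((∑ l, A i l) + (if i = i0 then -A i0 j0 else 0)) -
      ((∑ l, A l j) + (if j = j0 then -A i0 j0 else 0)) with hc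
    set d : Fin n → Fin n → ℝ := fun i j =>
      (if i = i0 then (1:ℝ) else 0) - (if j = j0 then 1 else 0) with hd
    have hform : ∀ t i j, (∑ l, B t i l) - (∑ l, B t l j) = c i j + d i j * t := by
      intro t i j
      rw [hrow, hcol]; simp only [hc, hd]; ring
    set a := A i0 j0 with ha
    have ha0 : 0 ≤ a := (hA i0 j0).1
    have ha1 : a ≤ 1 := (hA i0 j0).2
    have hBa : B a = A := by
      funext i j
      by_cases h : i = i0 ∧ j = j0
      · obtain ⟨h1, h2⟩ := h; subst h1; subst h2; simp [hB, ha]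
      · simp [hB, h]
    have hmain : f A ≤ (1 - a) * f (B 0) + a * f (B 1) := by
      rw [← hBa]
      have : ∀ t, f (B t) = ∑ i : Fin n, ∑ j : Fin n, |c i j + d i j * t| ^ k := by
        intro t
        simp only [hf]
        exact Finset.sum_congr rfl fun i _ => Finset.sum_congr rfl fun j _ => by
          rw [hform t i j]
      rw [this a, this 0, this 1, Finset.mul_sum, Finset.mul_sum, ← Finset.sum_add_distrib]
      refine Finset.sum_le_sum fun i _ => ?_
      rw [Finset.mul_sum, Finset.mul_sum, ← Finset.sum_add_distrib]
      exact Finset.sum_le_sum fun j _ =>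
        abs_affine_pow_combo k (c i j) (d i j) a ha0 ha1
    by_cases hle : f (B 0) ≤ f (B 1)
    · refine ⟨1, Or.inr rfl, ?_⟩
      calc f A ≤ (1 - a) * f (B 0) + a * f (B 1) := hmain
        _ ≤ (1 - a) * f (B 1) + a * f (B 1) := by nlinarith
        _ = f (B 1) := by ring
    · refine ⟨0, Or.inl rfl, ?_⟩
      push_neg at hle
      calc f A ≤ (1 - a) * f (B 0) + a * f (B 1) := hmain
        _ ≤ (1 - a) * f (B 0) + a * f (B 0) := by nlinarith
        _ = f (B 0) := by ring
  -- round all entries in a finite set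
  have round : ∀ S : Finset (Fin n × Fin n), ∀ A : Fin n → Fin n → ℝ,
      (∀ i j, A i j ∈ Set.Icc (0:ℝ) 1) →
      ∃ B : Fin n → Fin n → ℝ, (∀ i j, B i j ∈ Set.Icc (0:ℝ) 1) ∧
        (∀ p ∈ S, B p.1 p.2 = 0 ∨ B p.1 p.2 = 1) ∧ f A ≤ f B := by
    intro S
    induction S using Finset.induction with
    | empty => intro A hA; exact ⟨A, hA, by simp, le_refl _⟩
    | insert p S hp ih =>
      intro A hA
      obtain ⟨B, hB1, hB2, hB3⟩ := ih A hA
      obtain ⟨t, ht, hle⟩ := step B hB1 p.1 p.2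
      refine ⟨fun i j => if i = p.1 ∧ j = p.2 then t else B i j, ?_, ?_, hB3.trans hle⟩
      · intro i j
        by_cases h : i = p.1 ∧ j = p.2
        · simp only [if_pos h]
          rcases ht with ht | ht <;> simp [ht]
        · simpa [h] using hB1 i j
      · intro q hq
        by_cases h : q.1 = p.1 ∧ q.2 = p.2
        · simp only [if_pos h]; exact ht
        · simp only [if_neg h]
          rcases Finset.mem_insert.1 hq with hq | hq
          · exact absurd (by rw [hq]; exact ⟨rfl, rfl⟩) h
          · exact hB2 q hq
  -- boundedness
  have hbdd : BddAbove { r : ℝ | ∃ A : Fin n → Fin n → ℝ,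
      (∀ i j, A i j ∈ Set.Icc (0 : ℝ) 1) ∧ r = f A } := by
    refine ⟨(n:ℝ)^2 * (n:ℝ)^k, ?_⟩
    rintro r ⟨A, hA, rfl⟩
    have hterm : ∀ i j : Fin n, |(∑ l, A i l) - (∑ l, A l j)| ^ k ≤ (n:ℝ)^k := by
      intro i j
      refine pow_le_pow_left₀ (abs_nonneg _) ?_ k
      have h1 : (0:ℝ) ≤ ∑ l, A i l := Finset.sum_nonneg fun l _ => (hA i l).1
      have h2 : (∑ l : Fin n, A i l) ≤ n := by
        calc (∑ l : Fin n, A i l) ≤ ∑ _l : Fin n, (1:ℝ) :=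
              Finset.sum_le_sum fun l _ => (hA i l).2
          _ = n := by simp
      have h3 : (0:ℝ) ≤ ∑ l, A l j := Finset.sum_nonneg fun l _ => (hA l j).1
      have h4 : (∑ l : Fin n, A l j) ≤ n := by
        calc (∑ l : Fin n, A l j) ≤ ∑ _l : Fin n, (1:ℝ) :=
              Finset.sum_le_sum fun l _ => (hA l j).2
          _ = n := by simp
      rw [abs_le]; constructor <;> linarith
    calc f A ≤ ∑ _i : Fin n, ∑ _j : Fin n, (n:ℝ)^k := by
          exact Finset.sum_le_sum fun i _ => Finset.sum_le_sum fun j _ => hterm i j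
      _ = (n:ℝ)^2 * (n:ℝ)^k := by simp; ring
  have hsub : { r : ℝ | ∃ A : Fin n → Fin n → ℝ, (∀ i j, A i j = 0 ∨ A i j = 1) ∧ r = f A } ⊆
      { r : ℝ | ∃ A : Fin n → Fin n → ℝ, (∀ i j, A i j ∈ Set.Icc (0 : ℝ) 1) ∧ r = f A } := by
    rintro r ⟨A, hA, rfl⟩
    refine ⟨A, fun i j => ?_, rfl⟩
    rcases hA i j with h | h <;> rw [h] <;> constructor <;> norm_num
  have hne2 : { r : ℝ | ∃ A : Fin n → Fin n → ℝ, (∀ i j, A i j = 0 ∨ A i j = 1) ∧ r = f A }.Nonempty :=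
    ⟨f 0, 0, fun i j => Or.inl rfl, rfl⟩
  have hne1 := hne2.mono hsub
  have hbdd2 := hbdd.mono hsub
  apply le_antisymm
  · refine csSup_le hne1 ?_
    rintro r ⟨A, hA, rfl⟩
    obtain ⟨B, hB1, hB2, hB3⟩ := round Finset.univ A hA
    have hB2' : ∀ i j, B i j = 0 ∨ B i j = 1 := fun i j => hB2 (i, j) (Finset.mem_univ _)
    exact hB3.trans (le_csSup hbdd2 ⟨B, hB2', rfl⟩)
  · exact csSup_le_csSup hbdd hne2 hsub
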